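/- (Ostrowski) Let (x_n) be a bounded sequence in a finite-dimensional real normed space such that x_n − x_{n+1} → 0. Then the set of cluster points of (x_n) is nonempty, compact, and connected. -/

import Mathlib

open Filter Topology Metric Set

theorem ostrowski {X : Type*} [NormedAddCommGroup X] [NormedSpace ℝ X]
    [FiniteDimensional ℝ X]
    (x : ℕ → X) (hbd : ∃ M : ℝ, ∀ n, ‖x n‖ ≤ M)
    (hreg : Tendsto (fun n => x n - x (n + 1)) atTop (𝓝 0)) :
    let S := {p : X | ∃ φ : ℕ → ℕ, StrictMono φ ∧ Tendsto (x ∘ φ) atTop (𝓝 p)}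
    S.Nonempty ∧ IsCompact S ∧ IsConnected S := by
  intro S
  obtain ⟨M, hM⟩ := hbd
  have hxball : ∀ n, x n ∈ closedBall (0 : X) M := by
    intro n; simpa [mem_closedBall, dist_eq_norm] using hM n
  -- Nonempty
  have hSne : S.Nonempty := by
    obtain ⟨a, -, φ, hφ, hlim⟩ := tendsto_subseq_of_bounded isBounded_closedBall hxball
    exact ⟨a, φ, hφ, hlim⟩
  -- S as intersection of closures of tails
  have hST : S = ⋂ N, closure (x '' Ici N) := by
    apply Subset.antisymm
    · rintro p ⟨φ, hφ, hlim⟩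
      refine mem_iInter.2 fun N => mem_closure_of_tendsto hlim ?_
      filter_upwards [eventually_ge_atTop N] with n hn
      exact ⟨φ n, hn.trans (hφ.id_le n), rfl⟩
    · intro p hp
      have hfreq : ∀ n : ℕ, ∃ᶠ k in atTop, dist (x k) p < 1 / (n + 1 : ℝ) := by
        intro n
        rw [frequently_atTop]
        intro N
        have := mem_iInter.1 hp N
        rw [Metric.mem_closure_iff] at this
        obtain ⟨y, ⟨k, hk, rfl⟩, hy⟩ := this (1 / (n + 1 : ℝ)) (by positivity)
        exact ⟨k, hk, by rwa [dist_comm] at hy⟩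
      obtain ⟨φ, hφ, hP⟩ := extraction_forall_of_frequently hfreq
      refine ⟨φ, hφ, ?_⟩
      have hdist : Tendsto (fun n => dist ((x ∘ φ) n) p) atTop (𝓝 0) := by
        refine squeeze_zero (fun n => dist_nonneg) (fun n => (hP n).le) ?_
        exact tendsto_one_div_add_atTop_nhds_zero_nat
      exact tendsto_iff_dist_tendsto_zero.2 hdist
  -- Compact
  have hSsub : S ⊆ closedBall (0 : X) M := by
    rw [hST]
    intro p hp
    have := mem_iInter.1 hp 0
    have hsub : closure (x '' Ici 0) ⊆ closedBall (0 : X) M := by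
      refine closure_minimal ?_ isClosed_closedBall
      rintro y ⟨k, -, rfl⟩; exact hxball k
    exact hsub this
  have hSclosed : IsClosed S := by
    rw [hST]; exact isClosed_iInter fun N => isClosed_closure
  have hScomp : IsCompact S :=
    (isCompact_closedBall (0 : X) M).of_isClosed_subset hSclosed hSsub
  -- the sequence is eventually close to S
  have h_close : ∀ ε > (0 : ℝ), ∀ᶠ n in atTop, infDist (x n) S < ε := by
    intro ε hε
    by_contra h
    have hfr : ∃ᶠ n in atTop, ε ≤ infDist (x n) S :=
      frequently_atTop.mpr (by simpa [not_eventually, not_lt] using h)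
    obtain ⟨φ, hφ, hP⟩ := extraction_of_frequently_atTop hfr
    obtain ⟨a, -, θ, hθ, hlim⟩ :=
      tendsto_subseq_of_bounded isBounded_closedBall (x := x ∘ φ) (fun n => hxball (φ n))
    have haS : a ∈ S := ⟨φ ∘ θ, hφ.comp hθ, hlim⟩
    have h1 : Tendsto (fun n => infDist ((x ∘ φ) (θ n)) S) atTop (𝓝 (infDist a S)) :=
      ((continuous_infDist_pt S).tendsto a).comp hlim
    have h2 : ε ≤ infDist a S := ge_of_tendsto' h1 fun n => hP (θ n)
    rw [infDist_zero_of_mem haS] at h2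
    linarith
  refine ⟨hSne, hScomp, hSne, ?_⟩
  -- Preconnected
  intro u v hu hv hSuv ⟨a, haS, hau⟩ ⟨b, hbS, hbv⟩
  by_contra hne
  have hempty : ∀ s, s ∈ S → s ∈ u → s ∈ v → False := fun s h1 h2 h3 => hne ⟨s, h1, h2, h3⟩
  set A : Set X := S ∩ vᶜ with hA
  set B : Set X := S ∩ uᶜ with hB
  have hAcomp : IsCompact A := hScomp.inter_right hv.isClosed_compl
  have hBcomp : IsCompact B := hScomp.inter_right hu.isClosed_compl
  have haA : a ∈ A := ⟨haS, fun hav => hempty a haS hau hav⟩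
  have hbB : b ∈ B := ⟨hbS, fun hbu => hempty b hbS hbu hbv⟩
  have hcoverAB : ∀ s ∈ S, s ∈ A ∨ s ∈ B := by
    intro s hs
    rcases hSuv hs with h | h
    · exact Or.inl ⟨hs, fun hsv => hempty s hs h hsv⟩
    · exact Or.inr ⟨hs, fun hsu => hempty s hs hsu h⟩
  -- positive distance between A and B
  obtain ⟨a0, ha0A, ha0min'⟩ :=
    hAcomp.exists_isMinOn ⟨a, haA⟩ (continuous_infDist_pt B).continuousOn
  have ha0min : ∀ p ∈ A, infDist a0 B ≤ infDist p B := fun p hp => ha0min' hp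
  set d : ℝ := infDist a0 B with hd_def
  have hd_pos : 0 < d := by
    have ha0B : a0 ∉ B := fun h => h.2 (by
      rcases hSuv ha0A.1 with hh | hh
      · exact hh
      · exact absurd hh ha0A.2)
    exact (hBcomp.isClosed.notMem_iff_infDist_pos ⟨b, hbB⟩).1 ha0B
  have hdist : ∀ p ∈ A, ∀ q ∈ B, d ≤ dist p q := fun p hp q hq =>
    (ha0min p hp).trans (infDist_le_dist_of_mem hq)
  -- pick N with both eventual properties
  have hnorm : ∀ᶠ n in atTop, ‖x n - x (n + 1)‖ < d / 2 := by
    have := NormedAddCommGroup.tendsto_nhds_zero.mp hreg (d / 2) (by linarith)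
    simpa using this
  obtain ⟨N, hN⟩ := ((h_close (d / 4) (by linarith)).and hnorm).exists_forall_of_atTop
  -- cover property
  have hcov : ∀ n, N ≤ n →
      (∃ p ∈ A, dist (x n) p < d / 4) ∨ (∃ q ∈ B, dist (x n) q < d / 4) := by
    intro n hn
    obtain ⟨s, hsS, hs⟩ := (infDist_lt_iff hSne).1 (hN n hn).1
    rcases hcoverAB s hsS with h | h
    · exact Or.inl ⟨s, h, hs⟩
    · exact Or.inr ⟨s, h, hs⟩
  have key : ∀ A' B' : Set X, B'.Nonempty → B' ⊆ S →
      (∀ p ∈ A', ∀ q ∈ B', d ≤ dist p q) →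
      (∀ n, N ≤ n → (∃ p ∈ A', dist (x n) p < d / 4) ∨ (∃ q ∈ B', dist (x n) q < d / 4)) →
      (∃ p ∈ A', dist (x N) p < d / 4) → False := by
    intro A' B' hB'ne hB'S hd' hcov' h0
    have step : ∀ n, N ≤ n → ∃ p ∈ A', dist (x n) p < d / 4 := by
      intro n hn
      induction n, hn using Nat.le_induction with
      | base => exact h0
      | succ n hn ih =>
        obtain ⟨p, hpA, hp⟩ := ih
        rcases hcov' (n + 1) (hn.trans n.le_succ) with h | ⟨q, hqB, hq⟩
        · exact h
        · exfalso
          have hstep : dist (x n) (x (n + 1)) < d / 2 := by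
            rw [dist_eq_norm]; exact (hN n hn).2
          have : dist p q ≤ dist p (x n) + dist (x n) (x (n + 1)) + dist (x (n + 1)) q :=
            dist_triangle4 p (x n) (x (n + 1)) q
          have hpq := hd' p hpA q hqB
          rw [dist_comm p (x n)] at this
          linarith
    obtain ⟨b0, hb0⟩ := hB'ne
    obtain ⟨φ, hφ, hlim⟩ := hB'S hb0
    obtain ⟨N', hN'⟩ := Metric.tendsto_atTop.1 hlim (d / 4) (by linarith)
    set n := max N N' with hn
    have h1 : dist ((x ∘ φ) n) b0 < d / 4 := hN' n (le_max_right _ _)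
    obtain ⟨p, hpA, hp⟩ := step (φ n) ((le_max_left N N').trans (hφ.id_le n))
    have hpq := hd' p hpA b0 hb0
    have : dist p b0 ≤ dist p (x (φ n)) + dist (x (φ n)) b0 := dist_triangle _ _ _
    rw [dist_comm p (x (φ n))] at this
    simp only [Function.comp] at h1
    linarith
  rcases hcov N le_rfl with h | h
  · exact key A B ⟨b, hbB⟩ (fun q hq => hq.1) hdist hcov h
  · exact key B A ⟨a, haA⟩ (fun q hq => hq.1)
      (fun p hp q hq => by rw [dist_comm]; exact hdist q hq p hp)
      (fun n hn => (hcov n hn).symm) h
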